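/- Let P: C^n → R be a plurisubharmonic polynomial, homogeneous of degree 2k, without pluriharmonic terms, and write P(z) = Σ_{β:1≤|β|≤2k−1} z̄^β P_β(z) with P_β holomorphic homogeneous of degree 2k−|β|. Suppose h: C^n → C is a nonzero holomorphic homogeneous polynomial such that for every β either P_β ≡ 0 or (2k−|β|)/deg h is a positive integer and P_β = c_β·h^{(2k−|β|)/deg h} for some constant c_β ∈ C. If additionally P is not identically zero, then 2k/deg h is an integer, and there exists a function s: C → R of the form s(τ) = Σ_{l=1}^L γ_l·τ̄^l·τ^{2k/deg h − l} with γ_l ∈ C such that P = s ∘ h on C^n. -/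

import Mathlib

open Finset
open scoped ComplexConjugate

/-- Multi-index power `z^α = ∏ i, z i ^ α i`. -/
noncomputable def mpow {n : ℕ} (z : Fin n → ℂ) (α : Fin n →₀ ℕ) : ℂ :=
  ∏ i, z i ^ α i

/-- Value of the polynomial `P(z) = ∑_{(α,β)∈J} a_{α,β} z^α z̄^β`. -/
noncomputable def pval {n : ℕ} (J : Finset ((Fin n →₀ ℕ) × (Fin n →₀ ℕ)))
    (a : (Fin n →₀ ℕ) × (Fin n →₀ ℕ) → ℂ) (z : Fin n → ℂ) : ℂ :=
  ∑ p ∈ J, a p * mpow z p.1 * conj (mpow z p.2)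

/-- Levi form `L(P; z, V) = ∑_{i,j} (∂²P/∂z_i∂z̄_j)(z) V_i conj(V_j)` of
`P(z) = ∑_{(α,β)∈J} a_{α,β} z^α z̄^β`, computed termwise via
`∂²(z^α z̄^β)/∂z_i∂z̄_j = α_i β_j z^{α-e_i} z̄^{β-e_j}`. -/
noncomputable def leviForm {n : ℕ} (J : Finset ((Fin n →₀ ℕ) × (Fin n →₀ ℕ)))
    (a : (Fin n →₀ ℕ) × (Fin n →₀ ℕ) → ℂ) (z V : Fin n → ℂ) : ℂ :=
  ∑ p ∈ J, a p * ∑ i, ∑ j,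
    (p.1 i : ℂ) * (p.2 j : ℂ) * mpow z (p.1 - Finsupp.single i 1) *
      conj (mpow z (p.2 - Finsupp.single j 1)) * V i * conj (V j)


open MvPolynomial

private lemma realz : ∀ (m : ℕ) (Q : MvPolynomial (Fin m) ℂ),
    (∀ x : Fin m → ℝ, eval (fun i => (x i : ℂ)) Q = 0) → Q = 0 := by
  intro m
  induction m with
  | zero =>
    intro Q hQ
    refine MvPolynomial.funext (q := 0) fun x => ?_
    rw [map_zero]
    have hx : x = fun i => (((0 : Fin 0 → ℝ) i : ℝ) : ℂ) := by funext i; exact i.elim0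
    rw [hx]; exact hQ _
  | succ m ih =>
    intro Q hQ
    have hcoeff : ∀ j, (finSuccEquiv ℂ m Q).coeff j = 0 := by
      intro j
      apply ih
      intro x
      have hmap : Polynomial.map (eval fun i => (x i : ℂ)) (finSuccEquiv ℂ m Q) = 0 := by
        apply Polynomial.eq_zero_of_infinite_isRoot
        apply Set.infinite_of_injective_forall_mem (f := fun t : ℝ => (t : ℂ))
          Complex.ofReal_injective
        intro t
        simp only [Set.mem_setOf_eq, Polynomial.IsRoot]
        rw [← eval_eq_eval_mv_eval']
        have hpt : (Fin.cons (t : ℂ) (fun i => (x i : ℂ)) : Fin (m+1) → ℂ)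
            = fun i => (((Fin.cons t x : Fin (m+1) → ℝ) i : ℝ) : ℂ) := by
          funext i
          induction i using Fin.cases <;> simp
        rw [hpt]
        exact hQ _
      have h2 := congrArg (fun p => Polynomial.coeff p j) hmap
      simpa [Polynomial.coeff_map] using h2
    have h0 : finSuccEquiv ℂ m Q = 0 := Polynomial.ext fun j => by rw [hcoeff]; simp
    have h1 := congrArg (finSuccEquiv ℂ m).symm h0
    simpa using h1

private lemma realz_sum {n : ℕ} (Q : MvPolynomial (Fin n ⊕ Fin n) ℂ)
    (hQ : ∀ x : Fin n ⊕ Fin n → ℝ, eval (fun i => (x i : ℂ)) Q = 0) : Q = 0 := by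
  have h0 : rename (finSumFinEquiv (m := n) (n := n)) Q = 0 := by
    apply realz (n + n)
    intro x
    rw [eval_rename]
    exact hQ (x ∘ (finSumFinEquiv (m := n) (n := n)))
  have hinj := rename_injective (R := ℂ) (σ := Fin n ⊕ Fin n) (τ := Fin (n+n)) (finSumFinEquiv (m := n) (n := n)) (finSumFinEquiv (m := n) (n := n)).injective
  apply hinj
  simpa using h0

private noncomputable def gsub (n : ℕ) : Fin n ⊕ Fin n → MvPolynomial (Fin n ⊕ Fin n) ℂ :=
  Sum.elim (fun j => X (Sum.inl j) + C Complex.I * X (Sum.inr j))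
           (fun j => X (Sum.inl j) - C Complex.I * X (Sum.inr j))

private lemma eval_gsub {n : ℕ} (F : MvPolynomial (Fin n ⊕ Fin n) ℂ)
    (v : Fin n ⊕ Fin n → ℂ) :
    eval v (eval₂ (C : ℂ →+* MvPolynomial (Fin n ⊕ Fin n) ℂ) (gsub n) F)
      = eval (fun i => eval v (gsub n i)) F := by
  rw [eval₂_comp_left (eval v) C (gsub n) F]
  have hC : (eval v).comp (C : ℂ →+* MvPolynomial (Fin n ⊕ Fin n) ℂ) = RingHom.id ℂ := by
    ext r
    simp
  rw [hC]
  rfl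

private lemma polar {n : ℕ} (F : MvPolynomial (Fin n ⊕ Fin n) ℂ)
    (hF : ∀ z : Fin n → ℂ, eval (Sum.elim z (fun j => conj (z j))) F = 0) :
    ∀ ζ η : Fin n → ℂ, eval (Sum.elim ζ η) F = 0 := by
  have hG0 : eval₂ (C : ℂ →+* MvPolynomial (Fin n ⊕ Fin n) ℂ) (gsub n) F = 0 := by
    apply realz_sum
    intro x
    rw [eval_gsub]
    set z : Fin n → ℂ := fun j => (x (Sum.inl j) : ℂ) + Complex.I * (x (Sum.inr j) : ℂ) with hz
    have hpt : (fun i => eval (fun i => (x i : ℂ)) (gsub n i))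
        = Sum.elim z (fun j => conj (z j)) := by
      funext i
      cases i with
      | inl j => simp [gsub, hz]
      | inr j =>
        simp only [gsub, Sum.elim_inr, Sum.elim_inl, map_sub, map_mul, eval_X, eval_C, hz,
          map_add, Complex.conj_ofReal, Complex.conj_I, RingHom.coe_coe]
        ring
    rw [hpt]
    exact hF z
  intro ζ η
  have h1 := congrArg (eval (Sum.elim (fun j => (ζ j + η j) / 2)
      (fun j => (ζ j - η j) / (2 * Complex.I)))) hG0
  rw [eval_gsub, map_zero] at h1
  have hpt : (fun i => eval (Sum.elim (fun j => (ζ j + η j) / 2)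
      (fun j => (ζ j - η j) / (2 * Complex.I))) (gsub n i)) = Sum.elim ζ η := by
    funext i
    have hI : Complex.I ≠ 0 := Complex.I_ne_zero
    cases i with
    | inl j =>
      simp only [gsub, Sum.elim_inl, Sum.elim_inr, map_add, map_mul, eval_X, eval_C]
      field_simp
      ring
    | inr j =>
      simp only [gsub, Sum.elim_inr, Sum.elim_inl, map_sub, map_mul, eval_X, eval_C]
      field_simp
      ring
  rwa [hpt] at h1

private lemma eval_monomial_mpow {n : ℕ} (w : Fin n → ℂ) (β : Fin n →₀ ℕ) (c : ℂ) :
    eval w (monomial β c) = c * mpow w β := by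
  rw [eval_monomial, mpow]
  congr 1
  exact Finsupp.prod_fintype _ _ (fun i => pow_zero _)

private lemma conj_mpow {n : ℕ} (z : Fin n → ℂ) (β : Fin n →₀ ℕ) :
    conj (mpow z β) = mpow (fun j => conj (z j)) β := by
  simp [mpow, map_prod, map_pow]

private lemma conj_eval {n : ℕ} (w : Fin n → ℂ) (p : MvPolynomial (Fin n) ℂ) :
    conj (eval w p) = eval (fun j => conj (w j)) (map (starRingEnd ℂ) p) := by
  rw [eval_map]
  rw [show (eval w p) = eval₂ (RingHom.id ℂ) w p from rfl]
  rw [eval₂_comp_left (starRingEnd ℂ) (RingHom.id ℂ) w p]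
  rfl

private lemma eval_smul_homog {n d : ℕ} (p : MvPolynomial (Fin n) ℂ) (hp : p.IsHomogeneous d)
    (t : ℂ) (z : Fin n → ℂ) :
    eval (fun i => t * z i) p = t ^ d * eval z p := by
  rw [eval_eq', eval_eq', Finset.mul_sum]
  apply Finset.sum_congr rfl
  intro s hs
  have hdeg : ∑ i, s i = d := by
    have h1 := hp (MvPolynomial.mem_support_iff.mp hs)
    simp only [Finsupp.weight_apply, smul_eq_mul, Pi.one_apply, mul_one, Finsupp.sum] at h1
    rw [← h1]
    exact (Finset.sum_subset (Finset.subset_univ _)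
      (fun i _ hi => Finsupp.notMem_support_iff.mp hi)).symm
  have hprod : (∏ i, (t * z i) ^ s i) = t ^ d * ∏ i, z i ^ s i := by
    rw [← hdeg]
    simp only [mul_pow]
    rw [Finset.prod_mul_distrib, Finset.prod_pow_eq_pow_sum]
  rw [hprod]
  ring

private lemma freq_match {D : Finset ℕ} {u v : ℕ → ℂ} {N : ℕ}
    (hub : ∀ d ∈ D, d ≤ N)
    (hid : ∀ t : ℂ, ∑ d ∈ D, u d * t ^ (N - d) = ∑ d ∈ D, v d * t ^ d) :
    ∀ d ∈ D, u d = if N - d ∈ D then v (N - d) else 0 := by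
  have hpq : (∑ d ∈ D, Polynomial.C (u d) * Polynomial.X ^ (N - d))
      = ∑ d ∈ D, Polynomial.C (v d) * Polynomial.X ^ d := by
    apply Polynomial.funext
    intro t
    simp only [Polynomial.eval_finset_sum, Polynomial.eval_mul, Polynomial.eval_C,
      Polynomial.eval_pow, Polynomial.eval_X]
    exact hid t
  intro d hd
  have h1 := congrArg (fun p => Polynomial.coeff p (N - d)) hpq
  simp only [Polynomial.finset_sum_coeff, Polynomial.coeff_C_mul, Polynomial.coeff_X_pow,
    mul_ite, mul_one, mul_zero] at h1
  have hL : (∑ d' ∈ D, if N - d = N - d' then u d' else 0) = u d := by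
    have h4 := Finset.sum_eq_single_of_mem (s := D)
      (f := fun d' => if N - d = N - d' then u d' else 0) d hd (fun d' hd' hne => by
        have h2 := hub d' hd'
        have h3 := hub d hd
        rw [if_neg]
        omega)
    simpa using h4
  have hR : (∑ d' ∈ D, if N - d = d' then v d' else 0) = if N - d ∈ D then v (N - d) else 0 :=
    Finset.sum_ite_eq D (N - d) v
  rw [hL, hR] at h1
  exact h1

/-- let `P(z) = ∑_β z̄^β P_β(z)` be a real-valued plurisubharmonic
polynomial, homogeneous of degree `2k`, without pluriharmonic terms, where
`P_β(z) = ∑_{|α| = 2k−|β|} a_{α,β} z^α`.  Suppose `h` is a nonzero holomorphic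
homogeneous polynomial (of positive degree `dh`) such that for every `β` either
`P_β ≡ 0`, or `(2k−|β|)/dh` is a positive integer and `P_β = c_β·h^{(2k−|β|)/dh}`.
If `P ≢ 0`, then `dh ∣ 2k` and there is `s(τ) = ∑_{l=1}^L γ_l τ̄^l τ^{2k/dh − l}` with
`P = s ∘ h` on `ℂⁿ`. -/
theorem stmt19 {n k : ℕ} (hk : 0 < k)
    (J : Finset ((Fin n →₀ ℕ) × (Fin n →₀ ℕ)))
    (a : (Fin n →₀ ℕ) × (Fin n →₀ ℕ) → ℂ)
    (hdeg : ∀ p ∈ J, (∑ i, p.1 i) + (∑ i, p.2 i) = 2 * k)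
    (hnp : ∀ p ∈ J, p.1 ≠ 0 ∧ p.2 ≠ 0)
    (hsym : ∀ p ∈ J, (p.2, p.1) ∈ J)
    (hherm : ∀ p : (Fin n →₀ ℕ) × (Fin n →₀ ℕ), a (p.2, p.1) = conj (a p))
    (hpsh : ∀ z V : Fin n → ℂ, 0 ≤ (leviForm J a z V).re)
    (h : MvPolynomial (Fin n) ℂ) (hh0 : h ≠ 0) (dh : ℕ) (hdh : 0 < dh)
    (hhh : h.IsHomogeneous dh)
    (hPb : ∀ β : Fin n →₀ ℕ, 1 ≤ ∑ i, β i → ∑ i, β i ≤ 2 * k - 1 →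
      (∀ z : Fin n → ℂ, (∑ p ∈ J.filter (fun p => p.2 = β), a p * mpow z p.1) = 0) ∨
      (dh ∣ 2 * k - ∑ i, β i ∧ 0 < (2 * k - ∑ i, β i) / dh ∧ ∃ c : ℂ,
        ∀ z : Fin n → ℂ, (∑ p ∈ J.filter (fun p => p.2 = β), a p * mpow z p.1) =
          c * (MvPolynomial.eval z h) ^ ((2 * k - ∑ i, β i) / dh)))
    (hP0 : ∃ z : Fin n → ℂ, pval J a z ≠ 0) :
    dh ∣ 2 * k ∧ ∃ (L : ℕ) (γ : ℕ → ℂ), ∀ z : Fin n → ℂ,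
      pval J a z = ∑ l ∈ Finset.Icc 1 L,
        γ l * conj (MvPolynomial.eval z h) ^ l *
          (MvPolynomial.eval z h) ^ (2 * k / dh - l) := by
  classical
  -- degree bounds for indices in J
  have hdegJ : ∀ p ∈ J, 1 ≤ ∑ i, p.2 i ∧ ∑ i, p.2 i ≤ 2 * k - 1 := by
    intro p hp
    have h1 := hdeg p hp
    have h2 := hnp p hp
    have hb1 : 1 ≤ ∑ i, p.1 i := by
      obtain ⟨i, hi⟩ : ∃ i, p.1 i ≠ 0 := by
        by_contra hcon
        push_neg at hcon
        exact h2.1 (Finsupp.ext fun i => hcon i)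
      calc 1 ≤ p.1 i := Nat.one_le_iff_ne_zero.mpr hi
        _ ≤ ∑ i, p.1 i := Finset.single_le_sum (fun _ _ => Nat.zero_le _) (mem_univ i)
    have hb2 : 1 ≤ ∑ i, p.2 i := by
      obtain ⟨i, hi⟩ : ∃ i, p.2 i ≠ 0 := by
        by_contra hcon
        push_neg at hcon
        exact h2.2 (Finsupp.ext fun i => hcon i)
      calc 1 ≤ p.2 i := Nat.one_le_iff_ne_zero.mpr hi
        _ ≤ ∑ i, p.2 i := Finset.single_le_sum (fun _ _ => Nat.zero_le _) (mem_univ i)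
    omega
  set S : Finset (Fin n →₀ ℕ) := J.image Prod.snd with hS
  have hSmem : ∀ β ∈ S, 1 ≤ ∑ i, β i ∧ ∑ i, β i ≤ 2 * k - 1 := by
    intro β hβ
    obtain ⟨p, hp, rfl⟩ := Finset.mem_image.mp hβ
    exact hdegJ p hp
  -- choose the constants c β
  have hex : ∀ β ∈ S, ∃ cb : ℂ,
      (∀ z : Fin n → ℂ, (∑ p ∈ J.filter (fun p => p.2 = β), a p * mpow z p.1)
        = cb * (eval z h) ^ ((2 * k - ∑ i, β i) / dh)) ∧
      (cb ≠ 0 → dh ∣ 2 * k - ∑ i, β i) := by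
    intro β hβ
    obtain ⟨hb1, hb2⟩ := hSmem β hβ
    rcases hPb β hb1 hb2 with h0 | ⟨hdvd, _, cb, hcb⟩
    · exact ⟨0, fun z => by rw [h0 z]; ring, fun hc0 => absurd rfl hc0⟩
    · exact ⟨cb, hcb, fun _ => hdvd⟩
  choose! c hc1 hc2 using hex
  -- first representation
  have REP1 : ∀ z : Fin n → ℂ, pval J a z
      = ∑ β ∈ S, c β * mpow (fun j => conj (z j)) β * (eval z h) ^ ((2 * k - ∑ i, β i) / dh) := by
    intro z
    rw [pval, ← Finset.sum_fiberwise_of_maps_to (fun p hp => Finset.mem_image_of_mem Prod.snd hp)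
      (fun p => a p * mpow z p.1 * conj (mpow z p.2))]
    apply Finset.sum_congr rfl
    intro β hβ
    have hinner : (∑ p ∈ J.filter (fun p => p.2 = β), a p * mpow z p.1 * conj (mpow z p.2))
        = (∑ p ∈ J.filter (fun p => p.2 = β), a p * mpow z p.1) * conj (mpow z β) := by
      rw [Finset.sum_mul]
      apply Finset.sum_congr rfl
      intro p hp
      rw [(Finset.mem_filter.mp hp).2]
    rw [hinner, hc1 β hβ z, conj_mpow]
    ring
  set S' : Finset (Fin n →₀ ℕ) := S.filter (fun β => c β ≠ 0) with hS'
  set D : Finset ℕ := (Finset.Icc 1 (2 * k - 1)).filter (fun d => dh ∣ 2 * k - d) with hD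
  have hDmem : ∀ d ∈ D, (1 ≤ d ∧ d ≤ 2 * k - 1) ∧ dh ∣ 2 * k - d := by
    intro d hd
    have := Finset.mem_filter.mp hd
    exact ⟨Finset.mem_Icc.mp this.1, this.2⟩
  have hmaps : ∀ β ∈ S', (∑ i, β i) ∈ D := by
    intro β hβ
    obtain ⟨hβS, hβc⟩ := Finset.mem_filter.mp hβ
    obtain ⟨hb1, hb2⟩ := hSmem β hβS
    exact Finset.mem_filter.mpr ⟨Finset.mem_Icc.mpr ⟨hb1, hb2⟩, hc2 β hβS hβc⟩
  set A : ℕ → MvPolynomial (Fin n) ℂ :=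
    fun d => ∑ β ∈ S'.filter (fun β => (∑ i, β i) = d), monomial β (c β) with hA
  set Abar : ℕ → MvPolynomial (Fin n) ℂ := fun d => map (starRingEnd ℂ) (A d) with hAbar
  have evalA : ∀ (d : ℕ) (w : Fin n → ℂ), eval w (A d)
      = ∑ β ∈ S'.filter (fun β => (∑ i, β i) = d), c β * mpow w β := by
    intro d w
    rw [hA, map_sum]
    exact Finset.sum_congr rfl fun β _ => eval_monomial_mpow w β (c β)
  have hAhom : ∀ d, (A d).IsHomogeneous d := by
    intro d
    apply IsHomogeneous.sum
    intro β hβ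
    apply isHomogeneous_monomial
    have hβd : (∑ i, β i) = d := (Finset.mem_filter.mp hβ).2
    have hdeg2 : Finsupp.degree β = ∑ i, β i :=
      Finset.sum_subset (Finset.subset_univ _)
        (fun i _ hi => Finsupp.notMem_support_iff.mp hi)
    exact hdeg2.trans hβd
  have hAbarhom : ∀ d, (Abar d).IsHomogeneous d := fun d => (hAhom d).map _
  -- second representation
  have REP2 : ∀ z : Fin n → ℂ, pval J a z
      = ∑ d ∈ D, eval (fun j => conj (z j)) (A d) * (eval z h) ^ ((2 * k - d) / dh) := by
    intro z
    rw [REP1 z]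
    have step1 : (∑ β ∈ S, c β * mpow (fun j => conj (z j)) β
          * (eval z h) ^ ((2 * k - ∑ i, β i) / dh))
        = ∑ β ∈ S', c β * mpow (fun j => conj (z j)) β
          * (eval z h) ^ ((2 * k - ∑ i, β i) / dh) := by
      rw [hS']
      refine (Finset.sum_filter_of_ne ?_).symm
      intro β hβ hne hc0
      exact hne (by rw [hc0]; ring)
    rw [step1, ← Finset.sum_fiberwise_of_maps_to hmaps]
    apply Finset.sum_congr rfl
    intro d hd
    rw [evalA, Finset.sum_mul]
    apply Finset.sum_congr rfl
    intro β hβ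
    have hβd : (∑ i, β i) = d := (Finset.mem_filter.mp hβ).2
    rw [hβd]
  -- reality of P
  have hreal : ∀ z : Fin n → ℂ, conj (pval J a z) = pval J a z := by
    intro z
    rw [pval, map_sum]
    have hterm : ∀ p ∈ J, conj (a p * mpow z p.1 * conj (mpow z p.2))
        = a (p.2, p.1) * mpow z p.2 * conj (mpow z p.1) := by
      intro p hp
      rw [hherm p]
      simp only [map_mul, RingHomCompTriple.comp_apply, RingHom.id_apply,
        Complex.conj_conj]
      ring
    rw [Finset.sum_congr rfl hterm]
    refine Finset.sum_nbij' (fun p => (p.2, p.1)) (fun p => (p.2, p.1)) ?_ ?_ ?_ ?_ ?_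
    · intro p hp; exact hsym p hp
    · intro p hp; exact hsym p hp
    · intro p _; rfl
    · intro p _; rfl
    · intro p _; rfl
  set hbar : MvPolynomial (Fin n) ℂ := map (starRingEnd ℂ) h with hhbar
  set F : MvPolynomial (Fin n ⊕ Fin n) ℂ :=
      (∑ d ∈ D, rename Sum.inr (A d) * (rename Sum.inl h) ^ ((2 * k - d) / dh))
    - (∑ d ∈ D, rename Sum.inl (Abar d) * (rename Sum.inr hbar) ^ ((2 * k - d) / dh)) with hF
  have evalF : ∀ ζ η : Fin n → ℂ, eval (Sum.elim ζ η) F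
      = (∑ d ∈ D, eval η (A d) * (eval ζ h) ^ ((2 * k - d) / dh))
      - (∑ d ∈ D, eval ζ (Abar d) * (eval η hbar) ^ ((2 * k - d) / dh)) := by
    intro ζ η
    rw [hF, map_sub, map_sum, map_sum]
    congr 1 <;> refine Finset.sum_congr rfl fun d _ => ?_ <;>
      rw [map_mul, map_pow, eval_rename, eval_rename] <;> simp
  have hE : ∀ ζ η : Fin n → ℂ,
      (∑ d ∈ D, eval η (A d) * (eval ζ h) ^ ((2 * k - d) / dh))
      = ∑ d ∈ D, eval ζ (Abar d) * (eval η hbar) ^ ((2 * k - d) / dh) := by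
    have hFdiag : ∀ z : Fin n → ℂ, eval (Sum.elim z (fun j => conj (z j))) F = 0 := by
      intro z
      rw [evalF z (fun j => conj (z j)), sub_eq_zero]
      have hfirst : (∑ d ∈ D, eval (fun j => conj (z j)) (A d)
          * (eval z h) ^ ((2 * k - d) / dh)) = pval J a z := (REP2 z).symm
      have hsecond : (∑ d ∈ D, eval z (Abar d)
          * (eval (fun j => conj (z j)) hbar) ^ ((2 * k - d) / dh)) = pval J a z := by
        have hconj : ∀ d : ℕ, eval z (Abar d)
            = conj (eval (fun j => conj (z j)) (A d)) := by
          intro d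
          have h2 := conj_eval (fun j => conj (z j)) (A d)
          simp only [Complex.conj_conj] at h2
          rw [hAbar]
          exact h2.symm
        have hconj2 : eval (fun j => conj (z j)) hbar = conj (eval z h) := by
          rw [hhbar, ← conj_eval]
        rw [hconj2]
        calc (∑ d ∈ D, eval z (Abar d) * conj (eval z h) ^ ((2 * k - d) / dh))
            = conj (∑ d ∈ D, eval (fun j => conj (z j)) (A d)
              * (eval z h) ^ ((2 * k - d) / dh)) := by
              rw [map_sum]
              refine Finset.sum_congr rfl fun d _ => ?_
              rw [hconj d, map_mul, map_pow]
          _ = conj (pval J a z) := by rw [← REP2 z]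
          _ = pval J a z := hreal z
      rw [hfirst, hsecond]
    intro ζ η
    have h1 := polar F hFdiag ζ η
    rw [evalF ζ η, sub_eq_zero] at h1
    exact h1
  -- frequency matching
  have freq : ∀ ζ η : Fin n → ℂ, ∀ d ∈ D,
      eval η (A d) * (eval ζ h) ^ ((2 * k - d) / dh)
      = if 2 * k - d ∈ D then eval ζ (Abar (2 * k - d))
          * (eval η hbar) ^ ((2 * k - (2 * k - d)) / dh) else 0 := by
    intro ζ η
    apply freq_match (N := 2 * k)
      (u := fun d => eval η (A d) * (eval ζ h) ^ ((2 * k - d) / dh))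
      (v := fun d => eval ζ (Abar d) * (eval η hbar) ^ ((2 * k - d) / dh))
    · intro d hd
      have := (hDmem d hd).1
      omega
    · intro t
      have h1 := hE (fun i => t * ζ i) η
      have hL : (∑ d ∈ D, eval η (A d) * (eval (fun i => t * ζ i) h) ^ ((2 * k - d) / dh))
          = ∑ d ∈ D, (eval η (A d) * (eval ζ h) ^ ((2 * k - d) / dh)) * t ^ (2 * k - d) := by
        refine Finset.sum_congr rfl fun d hd => ?_
        rw [eval_smul_homog h hhh t ζ, mul_pow, ← pow_mul, Nat.mul_div_cancel' (hDmem d hd).2]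
        ring
      have hR : (∑ d ∈ D, eval (fun i => t * ζ i) (Abar d) * (eval η hbar) ^ ((2 * k - d) / dh))
          = ∑ d ∈ D, (eval ζ (Abar d) * (eval η hbar) ^ ((2 * k - d) / dh)) * t ^ d := by
        refine Finset.sum_congr rfl fun d hd => ?_
        rw [eval_smul_homog (Abar d) (hAbarhom d) t ζ]
        ring
      rw [hL, hR] at h1
      exact h1
  -- divisibility
  obtain ⟨z₀, hz₀⟩ := hP0
  have hterm : ∃ d ∈ D, eval (fun j => conj (z₀ j)) (A d)
      * (eval z₀ h) ^ ((2 * k - d) / dh) ≠ 0 := by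
    by_contra hcon
    push_neg at hcon
    exact hz₀ (by rw [REP2 z₀]; exact Finset.sum_eq_zero hcon)
  obtain ⟨d₀, hd₀D, hd₀⟩ := hterm
  have h2kd₀ : 2 * k - d₀ ∈ D := by
    by_contra hcon
    have h1 := freq z₀ (fun j => conj (z₀ j)) d₀ hd₀D
    rw [if_neg hcon] at h1
    exact hd₀ h1
  have hdvd2k : dh ∣ 2 * k := by
    have h1 := (hDmem d₀ hd₀D).2
    have h2 := (hDmem _ h2kd₀).2
    have hb := (hDmem d₀ hd₀D).1
    rw [Nat.sub_sub_self (by omega)] at h2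
    have h4 : 2 * k = (2 * k - d₀) + d₀ := by omega
    rw [h4]
    exact Nat.dvd_add h1 h2
  have hdD : ∀ d ∈ D, dh ∣ d ∧ 2 * k - d ∈ D := by
    intro d hd
    obtain ⟨⟨hb1, hb2⟩, hdvd⟩ := hDmem d hd
    have hdd : dh ∣ d := by
      have h5 := Nat.dvd_sub hdvd2k hdvd
      rwa [Nat.sub_sub_self (by omega)] at h5
    refine ⟨hdd, Finset.mem_filter.mpr ⟨Finset.mem_Icc.mpr ⟨by omega, by omega⟩, ?_⟩⟩
    rw [Nat.sub_sub_self (by omega)]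
    exact hdd
  have hzeta : ∃ ζ₀ : Fin n → ℂ, eval ζ₀ h ≠ 0 := by
    by_contra hcon
    push_neg at hcon
    exact hh0 (MvPolynomial.funext fun x => by rw [hcon x, map_zero])
  obtain ⟨ζ₀, hζ₀⟩ := hzeta
  have hslice : ∀ d ∈ D, ∀ η : Fin n → ℂ,
      eval η (A d) = (eval ζ₀ (Abar (2 * k - d)) / (eval ζ₀ h) ^ ((2 * k - d) / dh))
        * (eval η hbar) ^ (d / dh) := by
    intro d hd η
    obtain ⟨hdd, h2kd⟩ := hdD d hd
    have h1 := freq ζ₀ η d hd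
    rw [if_pos h2kd] at h1
    have h3 : 2 * k - (2 * k - d) = d := by
      have := (hDmem d hd).1
      omega
    rw [h3] at h1
    have hpow : (eval ζ₀ h) ^ ((2 * k - d) / dh) ≠ 0 := pow_ne_zero _ hζ₀
    rw [div_mul_eq_mul_div, eq_div_iff hpow]
    linear_combination h1
  -- conclusion
  set γ : ℕ → ℂ := fun l => if l * dh ∈ D
      then eval ζ₀ (Abar (2 * k - l * dh)) / (eval ζ₀ h) ^ ((2 * k - l * dh) / dh)
      else 0 with hγ
  refine ⟨hdvd2k, 2 * k, γ, ?_⟩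
  intro z
  rw [REP2 z]
  have hterm2 : ∀ d ∈ D, eval (fun j => conj (z j)) (A d) * (eval z h) ^ ((2 * k - d) / dh)
      = γ (d / dh) * conj (eval z h) ^ (d / dh) * (eval z h) ^ (2 * k / dh - d / dh) := by
    intro d hd
    obtain ⟨hdd, h2kd⟩ := hdD d hd
    have hγd : γ (d / dh) = eval ζ₀ (Abar (2 * k - d)) / (eval ζ₀ h) ^ ((2 * k - d) / dh) := by
      rw [hγ]
      simp only []
      rw [Nat.div_mul_cancel hdd, if_pos hd]
    have hberr : eval (fun j => conj (z j)) hbar = conj (eval z h) := by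
      rw [hhbar, ← conj_eval]
    have hexp : (2 * k - d) / dh = 2 * k / dh - d / dh := by
      obtain ⟨K, hK⟩ := hdvd2k
      obtain ⟨l, hl⟩ := hdd
      rw [hK, hl, ← Nat.mul_sub, Nat.mul_div_cancel_left _ hdh,
        Nat.mul_div_cancel_left _ hdh, Nat.mul_div_cancel_left _ hdh]
    rw [hexp] at hγd
    rw [hslice d hd (fun j => conj (z j)), hberr, hγd, hexp]
  rw [Finset.sum_congr rfl hterm2]
  have hreindex : (∑ d ∈ D, γ (d / dh) * conj (eval z h) ^ (d / dh)
        * (eval z h) ^ (2 * k / dh - d / dh))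
      = ∑ l ∈ (Finset.Icc 1 (2 * k)).filter (fun l => l * dh ∈ D),
        γ l * conj (eval z h) ^ l * (eval z h) ^ (2 * k / dh - l) := by
    refine Finset.sum_nbij' (fun d => d / dh) (fun l => l * dh) ?_ ?_ ?_ ?_ ?_
    · intro d hd
      obtain ⟨hdd, _⟩ := hdD d hd
      obtain ⟨⟨hb1, hb2⟩, _⟩ := hDmem d hd
      refine Finset.mem_filter.mpr ⟨Finset.mem_Icc.mpr ⟨?_, ?_⟩, ?_⟩
      · exact (Nat.one_le_div_iff hdh).mpr (Nat.le_of_dvd (by omega) hdd)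
      · exact le_trans (Nat.div_le_self d dh) (by omega)
      · rw [Nat.div_mul_cancel hdd]
        exact hd
    · intro l hl
      exact (Finset.mem_filter.mp hl).2
    · intro d hd
      exact Nat.div_mul_cancel (hdD d hd).1
    · intro l hl
      exact Nat.mul_div_cancel _ hdh
    · intro d hd
      rfl
  rw [hreindex]
  apply Finset.sum_subset (Finset.filter_subset _ _)
  intro l hl hnl
  have hγ0 : γ l = 0 := by
    rw [hγ]
    simp only []
    rw [if_neg]
    intro hcon
    exact hnl (Finset.mem_filter.mpr ⟨hl, hcon⟩)
  rw [hγ0]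
  ring
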